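/- Let R = A Aᴴ where A ∈ ℂ^{n×m}, and suppose y ∈ ℂⁿ lies in the range of A. Then the minimum of ‖s‖₂² over all s ∈ ℂᵐ with A s = y equals the smallest t such that the block matrix [[t, yᴴ],[y, R]] is positive semidefinite. -/

import Mathlib

open Matrix ComplexOrder

private lemma stmt1_normsum {k : ℕ} (v : Fin k → ℂ) :
    star v ⬝ᵥ v = ((∑ i, ‖v i‖ ^ 2 : ℝ) : ℂ) := by
  simp [dotProduct, Complex.conj_mul', Complex.ofReal_sum]

private lemma stmt1_adj {n m : ℕ} (A : Matrix (Fin n) (Fin m) ℂ) (v : Fin n → ℂ)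
    (w : Fin m → ℂ) : star v ⬝ᵥ A.mulVec w = star (Aᴴ.mulVec v) ⬝ᵥ w := by
  rw [star_mulVec, conjTranspose_conjTranspose, dotProduct_mulVec]

private lemma stmt1_dp_conj {k : ℕ} (v w : Fin k → ℂ) :
    star v ⬝ᵥ w = star (star w ⬝ᵥ v) := by
  simp [dotProduct, map_sum, mul_comm]

private lemma stmt1_quad {n : ℕ} (t : ℂ) (y : Fin n → ℂ) (R : Matrix (Fin n) (Fin n) ℂ)
    (a : Fin 1 → ℂ) (v : Fin n → ℂ) :
    star (Sum.elim a v) ⬝ᵥ (fromBlocks (of fun (_ : Fin 1) (_ : Fin 1) => t)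
      (of fun (_ : Fin 1) (j : Fin n) => star (y j))
      (of fun (i : Fin n) (_ : Fin 1) => y i) R).mulVec (Sum.elim a v)
    = t * (star (a 0) * a 0) + star (a 0) * (star y ⬝ᵥ v)
      + a 0 * (star v ⬝ᵥ y) + star v ⬝ᵥ R.mulVec v := by
  simp [fromBlocks_mulVec, dotProduct, Fintype.sum_sum_type, mulVec, mul_add,
    Finset.mul_sum, Finset.sum_add_distrib, mul_comm, mul_left_comm, mul_assoc]
  ring

theorem stmt1 (n m : ℕ) (A : Matrix (Fin n) (Fin m) ℂ) (y : Fin n → ℂ)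
    (hy : ∃ s : Fin m → ℂ, A.mulVec s = y) :
    sInf {t : ℝ | ∃ s : Fin m → ℂ, A.mulVec s = y ∧ t = ∑ i, ‖s i‖ ^ 2}
      = sInf {t : ℝ |
          (Matrix.fromBlocks
            (Matrix.of fun (_ : Fin 1) (_ : Fin 1) => (t : ℂ))
            (Matrix.of fun (_ : Fin 1) (j : Fin n) => star (y j))
            (Matrix.of fun (i : Fin n) (_ : Fin 1) => y i)
            (A * Aᴴ)).PosSemidef} := by
  classical
  -- obtain u with (A * Aᴴ) *ᵥ u = y
  obtain ⟨u, hu⟩ : ∃ u, (A * Aᴴ).mulVec u = y := by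
    have hrange : LinearMap.range (A * Aᴴ).mulVecLin = LinearMap.range A.mulVecLin := by
      apply Submodule.eq_of_le_of_finrank_le
      · rw [mulVecLin_mul]
        exact LinearMap.range_comp_le_range _ _
      · have := A.rank_self_mul_conjTranspose
        unfold Matrix.rank at this
        omega
    obtain ⟨s, hs⟩ := hy
    have : y ∈ LinearMap.range (A * Aᴴ).mulVecLin := by rw [hrange]; exact ⟨s, hs⟩
    exact this
  set p : Fin m → ℂ := Aᴴ.mulVec u with hp
  have hAp : A.mulVec p = y := by rw [hp, mulVec_mulVec, hu]
  set t₀ : ℝ := ∑ i, ‖p i‖ ^ 2 with ht₀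
  have hpp : star p ⬝ᵥ p = (t₀ : ℂ) := stmt1_normsum p
  -- key inner product identities
  have hupy : star u ⬝ᵥ y = (t₀ : ℂ) := by
    rw [← hAp, stmt1_adj, ← hp, hpp]
  have hyu : star y ⬝ᵥ u = (t₀ : ℂ) := by
    rw [stmt1_dp_conj, hupy]
    simp
  -- lower bound for the first set
  have lb1 : ∀ s : Fin m → ℂ, A.mulVec s = y → t₀ ≤ ∑ i, ‖s i‖ ^ 2 := by
    intro s hs
    have hw : A.mulVec (s - p) = 0 := by
      rw [mulVec_sub, hs, hAp, sub_self]
    have horth : star p ⬝ᵥ (s - p) = 0 := by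
      rw [hp, ← stmt1_adj, hw, dotProduct_zero]
    have horth' : star (s - p) ⬝ᵥ p = 0 := by
      rw [stmt1_dp_conj, horth]
      simp
    have hsplit : star s ⬝ᵥ s = (t₀ : ℂ) + star (s - p) ⬝ᵥ (s - p) := by
      have : star s ⬝ᵥ s = star (p + (s - p)) ⬝ᵥ (p + (s - p)) := by
        congr 1 <;> simp
      rw [this, star_add, add_dotProduct, dotProduct_add, dotProduct_add, hpp, horth,
        horth']
      ring
    have h1 := stmt1_normsum s
    have h2 := stmt1_normsum (s - p)
    rw [h1, h2] at hsplit
    have : (∑ i, ‖s i‖ ^ 2) = t₀ + ∑ i, ‖(s - p) i‖ ^ 2 := by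
      exact_mod_cast hsplit
    rw [this]
    have : (0:ℝ) ≤ ∑ i, ‖(s - p) i‖ ^ 2 :=
      Finset.sum_nonneg fun i _ => by positivity
    linarith
  -- membership of t₀ in the first set
  have mem1 : t₀ ∈ {t : ℝ | ∃ s : Fin m → ℂ, A.mulVec s = y ∧ t = ∑ i, ‖s i‖ ^ 2} :=
    ⟨p, hAp, rfl⟩
  -- the block matrix at t₀ is PSD, more generally for t ≥ t₀
  have mem2 : ∀ t : ℝ, t₀ ≤ t →
      (Matrix.fromBlocks
        (Matrix.of fun (_ : Fin 1) (_ : Fin 1) => (t : ℂ))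
        (Matrix.of fun (_ : Fin 1) (j : Fin n) => star (y j))
        (Matrix.of fun (i : Fin n) (_ : Fin 1) => y i)
        (A * Aᴴ)).PosSemidef := by
    intro t ht
    rw [posSemidef_iff_dotProduct_mulVec]
    constructor
    · rw [isHermitian_fromBlocks_iff]
      refine ⟨?_, ?_, ?_, isHermitian_mul_conjTranspose_self A⟩
      · ext i j; simp [conjTranspose_apply]
      · ext i j; simp [conjTranspose_apply]
      · ext i j; simp [conjTranspose_apply]
    · intro z
      have hz : z = Sum.elim (z ∘ Sum.inl) (z ∘ Sum.inr) := (Sum.elim_comp_inl_inr z).symm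
      rw [hz, stmt1_quad]
      set a : ℂ := (z ∘ Sum.inl) 0 with ha
      set v : Fin n → ℂ := z ∘ Sum.inr with hv
      set q : Fin m → ℂ := Aᴴ.mulVec v with hq
      have f2 : star v ⬝ᵥ y = star q ⬝ᵥ p := by
        rw [← hAp, stmt1_adj, ← hq]
      have f1 : star y ⬝ᵥ v = star p ⬝ᵥ q := by
        rw [stmt1_dp_conj, f2, stmt1_dp_conj q p]
        simp
      have f3 : star v ⬝ᵥ (A * Aᴴ).mulVec v = star q ⬝ᵥ q := by
        rw [← mulVec_mulVec, stmt1_adj, ← hq]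
      rw [f1, f2, f3]
      have expand : star (a • p + q) ⬝ᵥ (a • p + q)
          = star a * a * (star p ⬝ᵥ p) + star a * (star p ⬝ᵥ q)
            + a * (star q ⬝ᵥ p) + star q ⬝ᵥ q := by
        rw [star_add, star_smul, add_dotProduct, dotProduct_add, dotProduct_add,
          smul_dotProduct, dotProduct_smul, smul_dotProduct]
        simp [smul_eq_mul]
        ring
      have key : t * (star a * a) + star a * (star p ⬝ᵥ q) + a * (star q ⬝ᵥ p)
            + star q ⬝ᵥ q
          = (((t - t₀) * ‖a‖ ^ 2 : ℝ) : ℂ) + star (a • p + q) ⬝ᵥ (a • p + q) := by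
        rw [expand, hpp]
        have : (star a * a : ℂ) = ((‖a‖ ^ 2 : ℝ) : ℂ) := by
          simp [Complex.conj_mul']
        rw [this]
        push_cast
        ring
      rw [key]
      have h1 : (0:ℂ) ≤ (((t - t₀) * ‖a‖ ^ 2 : ℝ) : ℂ) := by
        rw [Complex.zero_le_real]
        have : (0:ℝ) ≤ ‖a‖ ^ 2 := by positivity
        nlinarith
      have h2 : (0:ℂ) ≤ star (a • p + q) ⬝ᵥ (a • p + q) :=
        dotProduct_star_self_nonneg _
      exact add_nonneg h1 h2
  -- lower bound for the second set
  have lb2 : ∀ t : ℝ,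
      (Matrix.fromBlocks
        (Matrix.of fun (_ : Fin 1) (_ : Fin 1) => (t : ℂ))
        (Matrix.of fun (_ : Fin 1) (j : Fin n) => star (y j))
        (Matrix.of fun (i : Fin n) (_ : Fin 1) => y i)
        (A * Aᴴ)).PosSemidef → t₀ ≤ t := by
    intro t ht
    have := ht.dotProduct_mulVec_nonneg (Sum.elim (fun _ => (1:ℂ)) (-u))
    rw [stmt1_quad] at this
    have huRu : star (-u) ⬝ᵥ (A * Aᴴ).mulVec (-u) = (t₀ : ℂ) := by
      rw [mulVec_neg, star_neg, neg_dotProduct, dotProduct_neg, neg_neg, hu, hupy]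
    have h1 : star y ⬝ᵥ (-u) = -(t₀ : ℂ) := by rw [dotProduct_neg, hyu]
    have h2 : star (-u) ⬝ᵥ y = -(t₀ : ℂ) := by rw [star_neg, neg_dotProduct, hupy]
    rw [h1, h2, huRu] at this
    simp only [star_one, mul_one, one_mul] at this
    have : (0:ℂ) ≤ ((t - t₀ : ℝ) : ℂ) := by
      convert this using 1
      push_cast
      ring
    rw [Complex.zero_le_real] at this
    linarith
  -- conclude
  have e1 : sInf {t : ℝ | ∃ s : Fin m → ℂ, A.mulVec s = y ∧ t = ∑ i, ‖s i‖ ^ 2} = t₀ := by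
    apply le_antisymm
    · exact csInf_le ⟨t₀, fun x ⟨s, hs, hx⟩ => hx ▸ lb1 s hs⟩ mem1
    · exact le_csInf ⟨t₀, mem1⟩ fun x ⟨s, hs, hx⟩ => hx ▸ lb1 s hs
  have e2 : sInf {t : ℝ |
      (Matrix.fromBlocks
        (Matrix.of fun (_ : Fin 1) (_ : Fin 1) => (t : ℂ))
        (Matrix.of fun (_ : Fin 1) (j : Fin n) => star (y j))
        (Matrix.of fun (i : Fin n) (_ : Fin 1) => y i)
        (A * Aᴴ)).PosSemidef} = t₀ := by
    apply le_antisymm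
    · exact csInf_le ⟨t₀, fun x hx => lb2 x hx⟩ (mem2 t₀ le_rfl)
    · exact le_csInf ⟨t₀, mem2 t₀ le_rfl⟩ fun x hx => lb2 x hx
  rw [e1, e2]
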